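/- The main series S₀ = Σ_{w∈B} Γ_b(w)·ξ(w) ∈ ℝ⟨⟨A⟩⟩ has zero constant term and satisfies the algebraic equation S₀ = b − a·exp⧢(2S₀)·c, where the products with the letters a and c are concatenation products. -/

import Mathlib

/-! STATEMENT 1: the main series `S₀ = Σ_{w∈B} Γ_b(w)·ξ(w)` has zero constant
term and satisfies `S₀ = b − a·exp⧢(2S₀)·c`. -/

/-! STATEMENT 0: Existence and uniqueness of the noncommutative power series
`S = b − a·exp⧢(2S)·c` with zero constant term. -/

/-- The three-letter alphabet `A = {a, b, c}`. -/
inductive Letter : Type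
  | a | b | c
deriving DecidableEq

/-- Words on the alphabet. -/
abbrev Word := List Letter

/-- Noncommutative power series over `ℝ` on the alphabet: a real coefficient
for every word. -/
abbrev Series := Word → ℝ

/-- The series associated to a single word (coefficient `1` on that word, `0` elsewhere). -/
def ofWord (v : Word) : Series := fun w => if w = v then 1 else 0

/-- Concatenation product of series: `⟨PQ, w⟩ = Σ_{uv = w} ⟨P,u⟩⟨Q,v⟩`. -/
noncomputable def cmul (P Q : Series) : Series :=
  fun w => ∑ i ∈ Finset.range (w.length + 1), P (w.take i) * Q (w.drop i)

/-- The subword of `w` selected by a boolean mask. -/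
def select (w : Word) (m : List Bool) : Word :=
  ((w.zip m).filter (fun p => p.2)).map Prod.fst

/-- The (bilinear) shuffle product of two series: the coefficient on `w` is the sum,
over all splittings of the positions of `w` into two complementary subsets, of the
product of the coefficients of the two selected subwords.  This is the bilinear
product determined on words by `ε⧢w = w⧢ε = w` and
`(w₁a₁)⧢(w₂a₂) = (w₁⧢(w₂a₂))a₁ + ((w₁a₁)⧢w₂)a₂`. -/
noncomputable def shuffle (P Q : Series) : Series := fun w =>
  ∑ m : Fin w.length → Bool,
    P (select w (List.ofFn m)) * Q (select w (List.ofFn (fun i => ! m i)))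

/-- Shuffle powers `P^{⧢k}`. -/
noncomputable def shufPow (P : Series) : ℕ → Series
  | 0 => ofWord []
  | k + 1 => shuffle (shufPow P k) P

/-- The shuffle exponential `exp⧢(P) = ε + Σ_{k≥1} P^{⧢k}/k!` (for `P` with zero
constant term only finitely many terms contribute to each coefficient). -/
noncomputable def shufExp (P : Series) : Series :=
  fun w => ∑' k : ℕ, ((k.factorial : ℝ))⁻¹ * shufPow P k w

/-! ### The ordered families of words `B_n`, `C_n` together with the map `ξ`

Each level is built as a *sorted list* (increasing with respect to the total
order of the construction), whose entries are pairs `(w, ξ(w))` of a word and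
the associated series `ξ(w)`; across levels, words of higher level (longer
words) are *smaller*.  The `C`-levels are produced by a single table-building
recursion. -/

/-- Table of the levels `C_1, …, C_n` (entry `i` of the table is the sorted
list of pairs `(w, ξ(w))` for `w ∈ C_i`; entry `0` is empty).

* `C_1 = {c}` with `ξ(c) = c`.
* For `m = 2k` even, `C_m = ⋃_{i=1}^{k} B_i C_{m−i}` ordered lexicographically
  (`vw < v′w′` iff `v < v′`, or `v = v′` and `w < w′`, where longer `v`'s are
  smaller, i.e. the blocks appear for `i = k, k−1, …, 1`); for `v = b ∈ B_1`,
  `ξ(bw) = b·ξ(w)`, and for `v = av′ ∈ B_i` with `v′ ∈ C_{i−1}` (`i ≥ 2`),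
  `ξ((av′)w) = a·(ξ(v′) ⧢ ξ(w))` (there `v′ > w` always, so `⊔′` is `⧢`).
* For `m = 2k+1` odd, additionally the block `D_k = {avw : v, w ∈ C_k, v ≥ w}`
  is prepended (its elements are smaller), ordered lexicographically in `(v,w)`,
  with `ξ(avw) = a·(ξ(v) ⊔′ ξ(w))`, where `ξ(v) ⊔′ ξ(w) = ξ(v) ⧢ ξ(w)` if
  `v > w` and `(1/2)·ξ(v) ⧢ ξ(v)` if `v = w`. -/
noncomputable def CPlevels : ℕ → List (List (Word × Series))
  | 0 => [[]]
  | n + 1 =>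
    let t := CPlevels n
    let C : ℕ → List (Word × Series) := fun i => t.getD i []
    let m := n + 1
    let k := m / 2
    let prods : List (Word × Series) :=
      (List.range k).flatMap (fun j =>
        let i := k - j
        if i = 1 then
          (C (m - 1)).map (fun q => (Letter.b :: q.1, cmul (ofWord [Letter.b]) q.2))
        else
          (C (i - 1)).flatMap (fun p =>
            (C (m - i)).map (fun q =>
              (Letter.a :: (p.1 ++ q.1),
                cmul (ofWord [Letter.a]) (shuffle p.2 q.2)))))
    let Ck := C k
    let Dk : List (Word × Series) :=
      (List.range Ck.length).flatMap (fun r =>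
        let p := Ck.getD r ([], 0)
        (List.range (r + 1)).map (fun s =>
          let q := Ck.getD s ([], 0)
          (Letter.a :: (p.1 ++ q.1),
            cmul (ofWord [Letter.a])
              (if s = r then (2 : ℝ)⁻¹ • shuffle p.2 p.2 else shuffle p.2 q.2))))
    let Cm : List (Word × Series) :=
      if m = 1 then [([Letter.c], ofWord [Letter.c])]
      else if m % 2 = 0 then prods
      else Dk ++ prods
    t ++ [Cm]

/-- The level `C_n`, as the sorted (increasing) list of pairs `(w, ξ(w))`, `w ∈ C_n`. -/
noncomputable def CP (n : ℕ) : List (Word × Series) := (CPlevels n).getD n []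

/-- The level `B_n`, as the sorted (increasing) list of pairs `(w, ξ(w))`, `w ∈ B_n`:
`B_1 = {b}` with `ξ(b) = b`, and `B_n = aC_{n−1}` (order inherited) with
`ξ(av) = a·ξ(v)`. -/
noncomputable def BP : ℕ → List (Word × Series)
  | 0 => []
  | 1 => [([Letter.b], ofWord [Letter.b])]
  | n + 2 => (CP (n + 1)).map (fun p => (Letter.a :: p.1, cmul (ofWord [Letter.a]) p.2))

/-- `Γ_b : B → ℤ`: `Γ_b(b) = 1` and `Γ_b(aw) = −(−2)^{|w|_a}·2^{|w|_b}`. -/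
def gammaB : Word → ℤ
  | [Letter.b] => 1
  | Letter.a :: w => -((-2 : ℤ) ^ (w.count Letter.a) * (2 : ℤ) ^ (w.count Letter.b))
  | _ => 0

/-- The main series `S₀ = Σ_{w ∈ B} Γ_b(w)·ξ(w) = Σ_n Σ_{w ∈ B_n} Γ_b(w)·ξ(w)`
(coefficientwise a finite sum, since `ξ(w)` for `w ∈ B_n` is supported on words
of length `n` and each `B_n` is finite). -/
noncomputable def mainSeries : Series :=
  fun u => ∑' n : ℕ, ((BP n).map (fun p => (gammaB p.1 : ℝ) * p.2 u)).sum

-- auxiliary development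

def der (x : Letter) (P : Series) : Series := fun w => P (x :: w)

@[simp] lemma select_nil (m : List Bool) : select [] m = [] := by
  simp [select]

@[simp] lemma select_cons (x : Letter) (w : Word) (b : Bool) (ms : List Bool) :
    select (x :: w) (b :: ms) = if b then x :: select w ms else select w ms := by
  cases b <;> simp [select]

lemma length_select_add_list (w : Word) (ms : List Bool) (h : ms.length = w.length) :
    (select w ms).length + (select w (ms.map (! ·))).length = w.length := by
  induction w generalizing ms with
  | nil => simp
  | cons x w ih =>
    cases ms with
    | nil => simp at h
    | cons b ms =>
      simp only [List.length_cons, Nat.succ.injEq] at h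
      have := ih ms h
      cases b <;> simp <;> omega

lemma ofFn_not (n : ℕ) (m : Fin n → Bool) :
    List.ofFn (fun i => ! m i) = (List.ofFn m).map (! ·) := by
  simp [List.map_ofFn]; rfl

lemma length_select_add (w : Word) (m : Fin w.length → Bool) :
    (select w (List.ofFn m)).length + (select w (List.ofFn fun i => !m i)).length
      = w.length := by
  rw [ofFn_not]
  exact length_select_add_list w _ (by simp)

lemma length_select_le (w : Word) (m : Fin w.length → Bool) :
    (select w (List.ofFn m)).length ≤ w.length := by
  have := length_select_add w m; omega

lemma length_select_le' (w : Word) (m : Fin w.length → Bool) :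
    (select w (List.ofFn fun i => !m i)).length ≤ w.length := by
  have := length_select_add w m; omega

-- chunk 2
@[simp] lemma shuffle_nil (P Q : Series) : shuffle P Q [] = P [] * Q [] := by
  simp [shuffle, select]

lemma ofFn_cons (n : ℕ) (b : Bool) (m : Fin n → Bool) :
    List.ofFn (Fin.cons b m : Fin (n+1) → Bool) = b :: List.ofFn m := by
  rw [List.ofFn_succ]
  simp

lemma ofFn_cons_not (n : ℕ) (b : Bool) (m : Fin n → Bool) :
    List.ofFn (fun i => ! (Fin.cons b m : Fin (n+1) → Bool) i)
      = (!b) :: List.ofFn (fun i => ! m i) := by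
  rw [List.ofFn_succ]
  simp

set_option maxHeartbeats 1000000 in
lemma shuffle_cons (P Q : Series) (x : Letter) (w : Word) :
    shuffle P Q (x :: w) = shuffle (der x P) Q w + shuffle P (der x Q) w := by
  rw [shuffle]
  rw [show (∑ m : Fin (x::w : Word).length → Bool,
        P (select (x::w) (List.ofFn m)) * Q (select (x::w) (List.ofFn fun i => !m i)))
      = ∑ p : Bool × (Fin w.length → Bool),
          P (select (x::w) (List.ofFn (Fin.cons p.1 p.2 : Fin (w.length+1) → Bool))) *
            Q (select (x::w) (List.ofFn fun i =>
                ! (Fin.cons p.1 p.2 : Fin (w.length+1) → Bool) i)) from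
    (Fintype.sum_equiv (Fin.consEquiv fun _ => Bool) _ _ (fun p => by rfl)).symm]
  rw [Fintype.sum_prod_type, Fintype.sum_bool]
  simp only [ofFn_cons, ofFn_cons_not, select_cons, Bool.not_true, Bool.not_false,
    if_true, if_false, ite_true, ite_false]
  simp [shuffle, der, add_comm]

lemma shuffle_comm (P Q : Series) : shuffle P Q = shuffle Q P := by
  funext w
  have inv : Function.Involutive (fun (m : Fin w.length → Bool) => fun i => !m i) := by
    intro m; funext i; simp
  rw [shuffle, ← Equiv.sum_comp inv.toPerm]
  apply Finset.sum_congr rfl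
  intro m _
  simp only [Function.Involutive.coe_toPerm, Bool.not_not]
  rw [mul_comm]

lemma shuffle_congr {P P' Q Q' : Series} (w : Word)
    (hP : ∀ u : Word, u.length ≤ w.length → P u = P' u)
    (hQ : ∀ u : Word, u.length ≤ w.length → Q u = Q' u) :
    shuffle P Q w = shuffle P' Q' w := by
  apply Finset.sum_congr rfl
  intro m _
  rw [hP _ (length_select_le w m), hQ _ (length_select_le' w m)]

lemma shuffle_add_left (P Q R : Series) :
    shuffle (P + Q) R = shuffle P R + shuffle Q R := by
  funext w; simp [shuffle, add_mul, Finset.sum_add_distrib]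

lemma shuffle_add_right (P Q R : Series) :
    shuffle P (Q + R) = shuffle P Q + shuffle P R := by
  funext w; simp [shuffle, mul_add, Finset.sum_add_distrib]

lemma shuffle_smul_left (c : ℝ) (P Q : Series) :
    shuffle (c • P) Q = c • shuffle P Q := by
  funext w; simp [shuffle, Finset.mul_sum, mul_assoc]

lemma shuffle_smul_right (c : ℝ) (P Q : Series) :
    shuffle P (c • Q) = c • shuffle P Q := by
  funext w
  simp only [shuffle, Pi.smul_apply, smul_eq_mul, Finset.mul_sum]
  apply Finset.sum_congr rfl; intros; ring

@[simp] lemma shuffle_zero_left (Q : Series) : shuffle 0 Q = 0 := by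
  funext w; simp [shuffle]

@[simp] lemma shuffle_zero_right (P : Series) : shuffle P 0 = 0 := by
  funext w; simp [shuffle]

@[simp] lemma cmul_nil_eval (P Q : Series) : cmul P Q [] = P [] * Q [] := by
  simp [cmul]

lemma cmul_cons (P Q : Series) (x : Letter) (w : Word) :
    cmul P Q (x :: w) = cmul (der x P) Q w + P [] * Q (x :: w) := by
  rw [cmul, show ((x::w : Word).length + 1) = w.length + 1 + 1 from rfl,
    Finset.sum_range_succ']
  simp [der, cmul]

lemma cmul_add_right (P Q R : Series) : cmul P (Q + R) = cmul P Q + cmul P R := by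
  funext w; simp [cmul, mul_add, Finset.sum_add_distrib]

lemma cmul_smul_right (c : ℝ) (P Q : Series) : cmul P (c • Q) = c • cmul P Q := by
  funext w
  simp only [cmul, Pi.smul_apply, smul_eq_mul, Finset.mul_sum]
  apply Finset.sum_congr rfl; intros; ring

@[simp] lemma cmul_zero_right (P : Series) : cmul P 0 = 0 := by
  funext w; simp [cmul]

lemma cmul_nil_left (Q : Series) : cmul (ofWord []) Q = Q := by
  funext u
  rw [cmul]
  rw [Finset.sum_eq_single 0]
  · simp [ofWord]
  · intro i hi hne
    have : u.take i ≠ [] := by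
      intro h
      rcases List.take_eq_nil_iff.1 h with h | h
      · exact hne h
      · subst h; simp at hi; omega
    simp [ofWord, this]
  · intro h; simp at h

lemma der_single (y x : Letter) :
    der y (ofWord [x]) = if y = x then ofWord [] else (0 : Series) := by
  funext w
  by_cases h : y = x <;> simp [der, ofWord, h]

@[simp] lemma cmul_zero_left (Q : Series) : cmul 0 Q = 0 := by
  funext w; simp [cmul]

lemma cmul_single_left_cons (x : Letter) (Q : Series) (y : Letter) (w : Word) :
    cmul (ofWord [x]) Q (y :: w) = if y = x then Q w else 0 := by
  rw [cmul_cons, der_single]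
  by_cases h : y = x <;> simp [h, ofWord, cmul_nil_left]

@[simp] lemma cmul_single_left_nil (x : Letter) (Q : Series) :
    cmul (ofWord [x]) Q [] = 0 := by
  simp [ofWord]

lemma cmul_congr_left {P P' : Series} (Q : Series) (w : Word)
    (h : ∀ u : Word, u.length ≤ w.length → P u = P' u) :
    cmul P Q w = cmul P' Q w := by
  apply Finset.sum_congr rfl
  intro i hi
  rw [h _ (by simp [List.length_take])]

-- chunk 3
def rder (x : Letter) (P : Series) : Series := fun w => P (w ++ [x])

lemma der_shuffle (x : Letter) (P Q : Series) :
    der x (shuffle P Q) = shuffle (der x P) Q + shuffle P (der x Q) := by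
  funext w; exact shuffle_cons P Q x w

@[simp] lemma der_ofWord_nil (x : Letter) : der x (ofWord []) = 0 := by
  funext w; simp [der, ofWord]

lemma shuffle_nil_left_aux : ∀ (w : Word) (Q : Series), shuffle (ofWord []) Q w = Q w := by
  intro w
  induction w with
  | nil => intro Q; simp [ofWord]
  | cons x w ih =>
    intro Q
    rw [shuffle_cons, der_ofWord_nil]
    simp [ih (der x Q), der]

lemma shuffle_nil_left (Q : Series) : shuffle (ofWord []) Q = Q := by
  funext w; exact shuffle_nil_left_aux w Q

lemma shuffle_assoc_aux : ∀ (w : Word) (P Q R : Series),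
    shuffle (shuffle P Q) R w = shuffle P (shuffle Q R) w := by
  intro w
  induction w with
  | nil => intro P Q R; simp [mul_assoc]
  | cons x w ih =>
    intro P Q R
    rw [shuffle_cons, shuffle_cons, der_shuffle, der_shuffle,
      shuffle_add_left, shuffle_add_right]
    simp only [Pi.add_apply, ih]
    ring

lemma shuffle_assoc (P Q R : Series) :
    shuffle (shuffle P Q) R = shuffle P (shuffle Q R) := by
  funext w; exact shuffle_assoc_aux w P Q R

lemma der_rder (x y : Letter) (P : Series) : der y (rder x P) = rder x (der y P) := rfl

lemma shuffle_snoc (x : Letter) : ∀ (w : Word) (P Q : Series),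
    shuffle P Q (w ++ [x]) = shuffle (rder x P) Q w + shuffle P (rder x Q) w := by
  intro w
  induction w with
  | nil =>
    intro P Q
    simp only [List.nil_append]
    rw [show ([x] : Word) = x :: [] from rfl, shuffle_cons]
    simp [der, rder]
  | cons y w ih =>
    intro P Q
    simp only [List.cons_append, shuffle_cons, ih, der_rder]
    ring

lemma cmul_snoc_single (X : Series) (y x : Letter) : ∀ (w : Word),
    cmul X (ofWord [y]) (w ++ [x]) = if x = y then X w else 0 := by
  intro w
  induction w generalizing X with
  | nil =>
    simp only [List.nil_append]
    rw [show ([x] : Word) = x :: [] from rfl, cmul_cons]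
    by_cases h : x = y <;> simp [ofWord, h]
  | cons z w ih =>
    rw [List.cons_append, cmul_cons, ih]
    have : ofWord [y] (z :: (w ++ [x])) = 0 := by simp [ofWord]
    rw [this, mul_zero, add_zero]
    rfl

lemma rder_cmul_single (X : Series) (y x : Letter) :
    rder x (cmul X (ofWord [y])) = if x = y then X else 0 := by
  funext w
  rw [rder]
  show cmul X (ofWord [y]) (w ++ [x]) = _
  rw [cmul_snoc_single]
  by_cases h : x = y <;> simp [h]

lemma shuffle_c_c (P Q : Series) :
    shuffle (cmul P (ofWord [Letter.c])) (cmul Q (ofWord [Letter.c]))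
      = cmul (shuffle (cmul P (ofWord [Letter.c])) Q
          + shuffle P (cmul Q (ofWord [Letter.c]))) (ofWord [Letter.c]) := by
  funext u
  rcases List.eq_nil_or_concat u with rfl | ⟨w, x, rfl⟩
  · simp [ofWord]
  · rw [List.concat_eq_append, shuffle_snoc, cmul_snoc_single, rder_cmul_single, rder_cmul_single]
    by_cases h : x = Letter.c
    · simp only [h, if_true, ite_true, Pi.add_apply]
      ring
    · simp [h]

-- chunk 4
lemma shuffle_nil_right (P : Series) : shuffle P (ofWord []) = P := by
  rw [shuffle_comm]; exact shuffle_nil_left P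

lemma der_shufPow (x : Letter) (P : Series) : ∀ k : ℕ,
    der x (shufPow P (k+1)) = ((k:ℝ)+1) • shuffle (der x P) (shufPow P k) := by
  intro k
  induction k with
  | zero =>
    show der x (shuffle (shufPow P 0) P) = _
    rw [show shufPow P 0 = ofWord [] from rfl, shuffle_nil_left, shuffle_nil_right]
    simp
  | succ k ih =>
    show der x (shuffle (shufPow P (k+1)) P) = _
    rw [der_shuffle, ih, shuffle_smul_left, shuffle_assoc]
    rw [show shuffle (shufPow P k) P = shufPow P (k+1) from rfl]
    rw [shuffle_comm (shufPow P (k+1)) (der x P)]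
    funext u
    simp only [Pi.add_apply, Pi.smul_apply, smul_eq_mul]
    push_cast
    ring

lemma shufPow_support (P : Series) (hP : P [] = 0) :
    ∀ (k : ℕ) (w : Word), w.length < k → shufPow P k w = 0 := by
  intro k
  induction k with
  | zero => intro w hw; omega
  | succ k ih =>
    intro w hw
    show shuffle (shufPow P k) P w = 0
    apply Finset.sum_eq_zero
    intro m _
    have hadd := length_select_add w m
    by_cases h : (select w (List.ofFn fun i => !m i)).length = 0
    · rw [List.length_eq_zero_iff.1 h, hP, mul_zero]
    · rw [ih _ (by omega), zero_mul]

lemma shufExp_eval (P : Series) (hP : P [] = 0) (w : Word) (n : ℕ) (hn : w.length < n) :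
    shufExp P w = ∑ k ∈ Finset.range n, ((k.factorial : ℝ))⁻¹ * shufPow P k w := by
  rw [shufExp]
  apply tsum_eq_sum
  intro k hk
  rw [shufPow_support P hP k w (by simp at hk; omega), mul_zero]

lemma shufExp_nil (P : Series) (hP : P [] = 0) : shufExp P [] = 1 := by
  rw [shufExp_eval P hP [] 1 (by simp)]
  simp [shufPow, ofWord]

lemma shuffle_sum_right (P : Series) (g : ℕ → Series) (n : ℕ) (w : Word) :
    shuffle P (fun u => ∑ k ∈ Finset.range n, g k u) w
      = ∑ k ∈ Finset.range n, shuffle P (g k) w := by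
  simp only [shuffle, Finset.mul_sum]
  rw [Finset.sum_comm]

lemma der_shufExp (x : Letter) (P : Series) (hP : P [] = 0) :
    der x (shufExp P) = shuffle (der x P) (shufExp P) := by
  funext w
  have hfac : ∀ (k : ℕ) (z : ℝ),
      (((k+1).factorial : ℝ))⁻¹ * (((k:ℝ)+1) * z) = ((k.factorial : ℝ))⁻¹ * z := by
    intro k z
    have h1 : ((k:ℝ)+1) ≠ 0 := by positivity
    have h2 : ((k.factorial : ℕ) : ℝ) ≠ 0 := Nat.cast_ne_zero.2 k.factorial_ne_zero
    rw [Nat.factorial_succ]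
    push_cast
    field_simp
  have lhs : der x (shufExp P) w
      = ∑ k ∈ Finset.range (w.length + 1),
          ((k.factorial : ℝ))⁻¹ * shuffle (der x P) (shufPow P k) w := by
    rw [der]
    rw [shufExp_eval P hP (x :: w) (w.length + 2) (by simp)]
    rw [Finset.sum_range_succ']
    rw [show shufPow P 0 (x :: w) = 0 by simp [shufPow, ofWord], mul_zero, add_zero]
    apply Finset.sum_congr rfl
    intro k _
    rw [show shufPow P (k+1) (x :: w) = der x (shufPow P (k+1)) w from rfl]
    rw [der_shufPow]
    simp only [Pi.smul_apply, smul_eq_mul]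
    exact hfac k _
  rw [lhs]
  have rhs : shuffle (der x P) (shufExp P) w
      = shuffle (der x P)
          (fun u => ∑ k ∈ Finset.range (w.length + 1),
            ((k.factorial : ℝ))⁻¹ * shufPow P k u) w := by
    apply shuffle_congr
    · intro u _; rfl
    · intro u hu
      exact shufExp_eval P hP u (w.length + 1) (by omega)
  rw [rhs, shuffle_sum_right]
  apply Finset.sum_congr rfl
  intro k _
  rw [show (fun u => ((k.factorial : ℝ))⁻¹ * shufPow P k u)
      = ((k.factorial : ℝ))⁻¹ • shufPow P k from rfl]
  rw [shuffle_smul_right]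
  simp

-- chunk 5
noncomputable def mu (w : Word) : ℝ := (-2)^(w.count Letter.a) * 2^(w.count Letter.b)

@[simp] lemma mu_nil : mu [] = 1 := by simp [mu]

lemma mu_cons_a (w : Word) : mu (Letter.a :: w) = -2 * mu w := by
  simp [mu, List.count_cons, pow_succ]; ring

lemma mu_cons_b (w : Word) : mu (Letter.b :: w) = 2 * mu w := by
  simp [mu, List.count_cons, pow_succ]; ring

lemma mu_append (v w : Word) : mu (v ++ w) = mu v * mu w := by
  simp [mu, List.count_append, pow_add]; ring

noncomputable def wsum (L : List (Word × Series)) : Series :=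
  (L.map (fun p => mu p.1 • p.2)).sum

@[simp] lemma wsum_nil : wsum [] = 0 := rfl

lemma wsum_cons (p : Word × Series) (L : List (Word × Series)) :
    wsum (p :: L) = mu p.1 • p.2 + wsum L := by
  simp [wsum]

lemma wsum_append (L1 L2 : List (Word × Series)) :
    wsum (L1 ++ L2) = wsum L1 + wsum L2 := by
  simp [wsum]

noncomputable def TCs (m : ℕ) : Series := wsum (CP m)

lemma CPlevels_length (n : ℕ) : (CPlevels n).length = n + 1 := by
  induction n with
  | zero => rfl
  | succ n ih =>
    show (CPlevels n ++ [_]).length = n + 2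
    simp [ih]

lemma CPlevels_getD (n i : ℕ) (h : i ≤ n) : (CPlevels n).getD i [] = CP i := by
  induction n with
  | zero =>
    interval_cases i
    rfl
  | succ n ih =>
    rcases Nat.lt_or_ge i (n+1) with h' | h'
    · show (CPlevels n ++ [_]).getD i [] = CP i
      rw [List.getD_append _ _ _ _ (by rw [CPlevels_length]; omega)]
      exact ih (by omega)
    · have : i = n + 1 := by omega
      subst this
      rfl

@[simp] lemma CP_zero : CP 0 = [] := rfl

@[simp] lemma TC_zero : TCs 0 = 0 := rfl

-- chunk 6
noncomputable def prodsE (n : ℕ) : List (Word × Series) :=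
  (List.range ((n+1)/2)).flatMap (fun j =>
    if (n+1)/2 - j = 1 then
      ((CPlevels n).getD (n+1-1) []).map
        (fun q => (Letter.b :: q.1, cmul (ofWord [Letter.b]) q.2))
    else
      ((CPlevels n).getD ((n+1)/2 - j - 1) []).flatMap (fun p =>
        ((CPlevels n).getD ((n+1) - ((n+1)/2 - j)) []).map (fun q =>
          (Letter.a :: (p.1 ++ q.1),
            cmul (ofWord [Letter.a]) (shuffle p.2 q.2)))))

noncomputable def DkE (n : ℕ) : List (Word × Series) :=
  (List.range (((CPlevels n).getD ((n+1)/2) []).length)).flatMap (fun r =>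
    (List.range (r + 1)).map (fun s =>
      (Letter.a :: ((((CPlevels n).getD ((n+1)/2) []).getD r ([], 0)).1
          ++ (((CPlevels n).getD ((n+1)/2) []).getD s ([], 0)).1),
        cmul (ofWord [Letter.a])
          (if s = r then
            (2 : ℝ)⁻¹ • shuffle (((CPlevels n).getD ((n+1)/2) []).getD r ([], 0)).2
              (((CPlevels n).getD ((n+1)/2) []).getD r ([], 0)).2
          else shuffle (((CPlevels n).getD ((n+1)/2) []).getD r ([], 0)).2
              (((CPlevels n).getD ((n+1)/2) []).getD s ([], 0)).2))))

noncomputable def CmExpr (n : ℕ) : List (Word × Series) :=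
  if n + 1 = 1 then [([Letter.c], ofWord [Letter.c])]
  else if (n+1) % 2 = 0 then prodsE n
  else DkE n ++ prodsE n

lemma CPlevels_succ (n : ℕ) : CPlevels (n+1) = CPlevels n ++ [CmExpr n] := rfl

lemma CP_succ (n : ℕ) : CP (n+1) = CmExpr n := by
  show (CPlevels (n+1)).getD (n+1) [] = _
  rw [CPlevels_succ, List.getD_append_right _ _ _ _ (by rw [CPlevels_length])]
  rw [CPlevels_length]
  simp

lemma wsum_flatMap_range (f : ℕ → List (Word × Series)) (K : ℕ) :
    wsum ((List.range K).flatMap f) = ∑ j ∈ Finset.range K, wsum (f j) := by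
  induction K with
  | zero => simp
  | succ K ih =>
    rw [List.range_succ, List.flatMap_append, wsum_append, ih, Finset.sum_range_succ]
    simp [wsum_append]

lemma wsum_map_range (g : ℕ → Word × Series) (K : ℕ) :
    wsum ((List.range K).map g) = ∑ s ∈ Finset.range K, mu (g s).1 • (g s).2 := by
  induction K with
  | zero => simp
  | succ K ih =>
    rw [List.range_succ, List.map_append, wsum_append, ih, Finset.sum_range_succ]
    simp [wsum, wsum_cons]

lemma wsum_eq_sum_range (L : List (Word × Series)) :
    wsum L = ∑ r ∈ Finset.range L.length,
      mu (L.getD r ([], 0)).1 • (L.getD r ([], 0)).2 := by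
  induction L with
  | nil => simp
  | cons p L ih =>
    rw [wsum_cons, ih, List.length_cons, Finset.sum_range_succ']
    simp [add_comm]

lemma wsum_bblock (L : List (Word × Series)) :
    wsum (L.map (fun q => (Letter.b :: q.1, cmul (ofWord [Letter.b]) q.2)))
      = (2:ℝ) • cmul (ofWord [Letter.b]) (wsum L) := by
  induction L with
  | nil => simp
  | cons q L ih =>
    rw [List.map_cons, wsum_cons, wsum_cons, ih, cmul_add_right, cmul_smul_right]
    simp only [mu_cons_b, smul_add, smul_smul]

lemma wsum_ablock_inner (v : Word) (X : Series) (L2 : List (Word × Series)) :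
    wsum (L2.map (fun q => (Letter.a :: (v ++ q.1),
        cmul (ofWord [Letter.a]) (shuffle X q.2))))
      = ((-2) * mu v) • cmul (ofWord [Letter.a]) (shuffle X (wsum L2)) := by
  induction L2 with
  | nil => simp
  | cons q L ih =>
    rw [List.map_cons, wsum_cons, wsum_cons, ih, shuffle_add_right, cmul_add_right,
      shuffle_smul_right, cmul_smul_right]
    rw [mu_cons_a, mu_append]
    simp only [smul_add, smul_smul]
    ring_nf

lemma wsum_ablock (L1 L2 : List (Word × Series)) :
    wsum (L1.flatMap (fun p => L2.map (fun q => (Letter.a :: (p.1 ++ q.1),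
        cmul (ofWord [Letter.a]) (shuffle p.2 q.2)))))
      = (-2:ℝ) • cmul (ofWord [Letter.a]) (shuffle (wsum L1) (wsum L2)) := by
  induction L1 with
  | nil => simp
  | cons p L ih =>
    rw [List.flatMap_cons, wsum_append, ih, wsum_cons, shuffle_add_left,
      shuffle_smul_left, cmul_add_right, cmul_smul_right, wsum_ablock_inner]
    simp only [smul_add, smul_smul]

-- chunk 7
lemma shuffle_sum_left' (F : Finset ℕ) (f : ℕ → Series) (Q : Series) :
    shuffle (∑ r ∈ F, f r) Q = ∑ r ∈ F, shuffle (f r) Q := by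
  funext w
  simp only [shuffle, Finset.sum_apply, Finset.sum_mul]
  rw [Finset.sum_comm]

lemma shuffle_sum_right' (F : Finset ℕ) (P : Series) (f : ℕ → Series) :
    shuffle P (∑ r ∈ F, f r) = ∑ r ∈ F, shuffle P (f r) := by
  funext w
  simp only [shuffle, Finset.sum_apply, Finset.mul_sum]
  rw [Finset.sum_comm]

lemma cmul_sum_right' (F : Finset ℕ) (P : Series) (f : ℕ → Series) :
    cmul P (∑ r ∈ F, f r) = ∑ r ∈ F, cmul P (f r) := by
  funext w
  simp only [cmul, Finset.sum_apply, Finset.mul_sum]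
  rw [Finset.sum_comm]

lemma triangle (G : ℕ → ℕ → Series) (hG : ∀ r s, G r s = G s r) (N : ℕ) :
    ∑ r ∈ Finset.range N, ∑ s ∈ Finset.range (r+1),
        (if s = r then G r r else (2:ℝ) • G r s)
      = ∑ r ∈ Finset.range N, ∑ s ∈ Finset.range N, G r s := by
  induction N with
  | zero => simp
  | succ N ih =>
    have h1 : ∑ s ∈ Finset.range (N+1), (if s = N then G N N else (2:ℝ) • G N s)
        = (∑ s ∈ Finset.range N, (2:ℝ) • G N s) + G N N := by
      rw [Finset.sum_range_succ]
      simp only [if_pos rfl]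
      congr 1
      apply Finset.sum_congr rfl
      intro s hs
      rw [if_neg (by simp at hs; omega)]
    have h2 : ∑ r ∈ Finset.range (N+1), ∑ s ∈ Finset.range (N+1), G r s
        = (∑ r ∈ Finset.range N, ∑ s ∈ Finset.range N, G r s)
          + ((∑ r ∈ Finset.range N, G r N) + ((∑ s ∈ Finset.range N, G N s) + G N N)) := by
      rw [Finset.sum_range_succ (f := fun r => ∑ s ∈ Finset.range (N+1), G r s)]
      rw [Finset.sum_range_succ (f := fun s => G N s)]
      have : ∀ r, ∑ s ∈ Finset.range (N+1), G r s
          = (∑ s ∈ Finset.range N, G r s) + G r N := fun r => Finset.sum_range_succ _ _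
      rw [Finset.sum_congr rfl (fun r _ => this r), Finset.sum_add_distrib]
      abel
    rw [Finset.sum_range_succ (f := fun r => ∑ s ∈ Finset.range (r+1),
      (if s = r then G r r else (2:ℝ) • G r s)), h1, ih, h2]
    have h3 : ∀ r, (2:ℝ) • G N r = G N r + G r N := by
      intro r; rw [two_smul, hG N r]
    simp only [h3, Finset.sum_add_distrib]
    abel

lemma wsum_Dk (L : List (Word × Series)) :
    wsum ((List.range L.length).flatMap (fun r =>
      (List.range (r + 1)).map (fun s =>
        (Letter.a :: ((L.getD r ([], 0)).1 ++ (L.getD s ([], 0)).1),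
          cmul (ofWord [Letter.a])
            (if s = r then (2 : ℝ)⁻¹ • shuffle (L.getD r ([], 0)).2 (L.getD r ([], 0)).2
             else shuffle (L.getD r ([], 0)).2 (L.getD s ([], 0)).2)))))
      = -cmul (ofWord [Letter.a]) (shuffle (wsum L) (wsum L)) := by
  set p : ℕ → Word × Series := fun r => L.getD r ([], 0) with hp
  set G : ℕ → ℕ → Series := fun r s =>
    (mu (p r).1 * mu (p s).1) • cmul (ofWord [Letter.a]) (shuffle (p r).2 (p s).2) with hGdef
  have hG : ∀ r s, G r s = G s r := by
    intro r s
    simp only [hGdef]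
    rw [shuffle_comm, mul_comm]
  have hGrs : ∀ r s, G r s
      = (mu (p r).1 * mu (p s).1) • cmul (ofWord [Letter.a]) (shuffle (p r).2 (p s).2) := by
    intro r s; rw [hGdef]
  have hfull : cmul (ofWord [Letter.a]) (shuffle (wsum L) (wsum L))
      = ∑ r ∈ Finset.range L.length, ∑ s ∈ Finset.range L.length, G r s := by
    rw [wsum_eq_sum_range L, shuffle_sum_left', cmul_sum_right']
    apply Finset.sum_congr rfl
    intro r _
    rw [shuffle_smul_left, cmul_smul_right, shuffle_sum_right', cmul_sum_right',
      Finset.smul_sum]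
    apply Finset.sum_congr rfl
    intro s _
    rw [shuffle_smul_right, cmul_smul_right, smul_smul, hGrs r s]
  rw [wsum_flatMap_range]
  have hterm : ∀ r, wsum ((List.range (r + 1)).map (fun s =>
      (Letter.a :: ((p r).1 ++ (p s).1),
        cmul (ofWord [Letter.a])
          (if s = r then (2 : ℝ)⁻¹ • shuffle (p r).2 (p r).2
           else shuffle (p r).2 (p s).2))))
      = ∑ s ∈ Finset.range (r+1),
          (-1:ℝ) • (if s = r then G r r else (2:ℝ) • G r s) := by
    intro r
    rw [wsum_map_range]
    apply Finset.sum_congr rfl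
    intro s _
    by_cases h : s = r
    · subst h
      simp only [eq_self_iff_true, if_true]
      rw [mu_cons_a, mu_append, cmul_smul_right, hGrs]
      rw [smul_smul, smul_smul]
      congr 1
      ring
    · simp only [if_neg h]
      rw [mu_cons_a, mu_append, hGrs]
      rw [smul_smul, smul_smul]
      congr 1
      ring
  calc ∑ r ∈ Finset.range L.length, wsum _
      = ∑ r ∈ Finset.range L.length, ∑ s ∈ Finset.range (r+1),
          (-1:ℝ) • (if s = r then G r r else (2:ℝ) • G r s) := by
        apply Finset.sum_congr rfl
        intro r _
        exact hterm r
    _ = (-1:ℝ) • ∑ r ∈ Finset.range L.length, ∑ s ∈ Finset.range (r+1),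
          (if s = r then G r r else (2:ℝ) • G r s) := by
        rw [Finset.smul_sum]
        apply Finset.sum_congr rfl
        intro r _
        rw [Finset.smul_sum]
    _ = (-1:ℝ) • ∑ r ∈ Finset.range L.length, ∑ s ∈ Finset.range L.length, G r s := by
        rw [triangle G hG]
    _ = -cmul (ofWord [Letter.a]) (shuffle (wsum L) (wsum L)) := by
        rw [hfull, neg_one_smul]

-- chunk 8
@[simp] lemma TCs_one : TCs 1 = ofWord [Letter.c] := by
  show wsum (CP 1) = _
  rw [show (1:ℕ) = 0 + 1 from rfl, CP_succ]
  simp only [CmExpr, if_true, eq_self_iff_true]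
  rw [wsum_cons]
  simp [mu]

lemma wsum_prodsE_term (n : ℕ) (h1 : 1 ≤ n) (j : ℕ) (hj : j < (n+1)/2) :
    wsum (if (n+1)/2 - j = 1 then
      ((CPlevels n).getD (n+1-1) []).map
        (fun q => (Letter.b :: q.1, cmul (ofWord [Letter.b]) q.2))
    else
      ((CPlevels n).getD ((n+1)/2 - j - 1) []).flatMap (fun p =>
        ((CPlevels n).getD ((n+1) - ((n+1)/2 - j)) []).map (fun q =>
          (Letter.a :: (p.1 ++ q.1),
            cmul (ofWord [Letter.a]) (shuffle p.2 q.2)))))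
    = if (n+1)/2 - j = 1 then (2:ℝ) • cmul (ofWord [Letter.b]) (TCs n)
      else (-2:ℝ) • cmul (ofWord [Letter.a])
        (shuffle (TCs ((n+1)/2 - j - 1)) (TCs (n+1 - ((n+1)/2 - j)))) := by
  by_cases h : (n+1)/2 - j = 1
  · rw [if_pos h, if_pos h]
    rw [show n+1-1 = n from rfl, CPlevels_getD n n le_rfl, wsum_bblock]
    rfl
  · rw [if_neg h, if_neg h]
    rw [CPlevels_getD n ((n+1)/2 - j - 1) (by omega),
      CPlevels_getD n ((n+1) - ((n+1)/2 - j)) (by omega), wsum_ablock]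
    rfl

lemma wsum_prodsE (n k : ℕ) (h1 : 1 ≤ n) (hk : (n+1)/2 = k) :
    wsum (prodsE n) = (2:ℝ) • cmul (ofWord [Letter.b]) (TCs n)
      + ∑ j ∈ Finset.range (k - 1),
          (-2:ℝ) • cmul (ofWord [Letter.a]) (shuffle (TCs (j+1)) (TCs (n-1-j))) := by
  simp only [prodsE]
  rw [wsum_flatMap_range]
  rw [Finset.sum_congr rfl (fun j hj => wsum_prodsE_term n h1 j (Finset.mem_range.1 hj))]
  rw [← Finset.sum_range_reflect]
  rw [hk]
  obtain ⟨k', rfl⟩ : ∃ k', k = k' + 1 := ⟨k - 1, by omega⟩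
  rw [Finset.sum_range_succ']
  rw [add_comm]
  congr 1
  · -- the j = 0 term
    rw [show k' + 1 - (k' + 1 - 1 - 0) = 1 from by omega, if_pos rfl]
  · apply Finset.sum_congr rfl
    intro j hj
    have hj' : j < k' := Finset.mem_range.1 hj
    rw [show k' + 1 - (k' + 1 - 1 - (j + 1)) = j + 2 from by omega]
    rw [if_neg (by omega)]
    rw [show j + 2 - 1 = j + 1 from rfl, show n + 1 - (j + 2) = n - 1 - j from by omega]

lemma TCs_rec (n k : ℕ) (h1 : 1 ≤ n) (hk : (n+1)/2 = k) :
    TCs (n+1) = (2:ℝ) • cmul (ofWord [Letter.b]) (TCs n)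
      + (∑ j ∈ Finset.range (k - 1),
          (-2:ℝ) • cmul (ofWord [Letter.a]) (shuffle (TCs (j+1)) (TCs (n-1-j))))
      + (if (n+1) % 2 = 1 then
          -cmul (ofWord [Letter.a]) (shuffle (TCs k) (TCs k)) else 0) := by
  have h0 : TCs (n+1) = wsum (CmExpr n) := by
    show wsum (CP (n+1)) = _
    rw [CP_succ]
  rw [h0]
  simp only [CmExpr]
  rw [if_neg (by omega)]
  by_cases hpar : (n+1) % 2 = 0
  · rw [if_pos hpar, wsum_prodsE n k h1 hk]
    rw [if_neg (by omega)]
    rw [add_zero]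
  · rw [if_neg hpar, wsum_append, wsum_prodsE n k h1 hk]
    rw [if_pos (by omega)]
    have hDk : wsum (DkE n) = -cmul (ofWord [Letter.a]) (shuffle (TCs k) (TCs k)) := by
      simp only [DkE]
      rw [CPlevels_getD n ((n+1)/2) (by omega), hk]
      exact wsum_Dk (CP k)
    rw [hDk]
    abel

-- chunk 9
def Supp (X : Series) (t : ℕ) : Prop := ∀ u : Word, X u ≠ 0 → u.length = t

lemma supp_congr {X : Series} {t t' : ℕ} (h : t = t') (hX : Supp X t) : Supp X t' :=
  h ▸ hX

lemma supp_ofWord (v : Word) : Supp (ofWord v) v.length := by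
  intro u hu
  by_cases e : u = v
  · rw [e]
  · simp [ofWord, e] at hu

lemma supp_smul (c : ℝ) {X : Series} {t : ℕ} (hX : Supp X t) : Supp (c • X) t := by
  intro u hu
  apply hX
  intro h
  apply hu
  simp [h]

lemma supp_cmul_single (x : Letter) {X : Series} {t : ℕ} (h : Supp X t) :
    Supp (cmul (ofWord [x]) X) (t + 1) := by
  intro u hu
  cases u with
  | nil => exact absurd (cmul_single_left_nil x X) hu
  | cons y w =>
    rw [cmul_single_left_cons] at hu
    by_cases e : y = x
    · rw [if_pos e] at hu
      have := h w hu
      simp [this]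
    · rw [if_neg e] at hu
      simp at hu

lemma supp_shuffle {X Y : Series} {t1 t2 : ℕ} (hX : Supp X t1) (hY : Supp Y t2) :
    Supp (shuffle X Y) (t1 + t2) := by
  intro u hu
  by_contra hne
  apply hu
  apply Finset.sum_eq_zero
  intro m _
  by_cases h1 : X (select u (List.ofFn m)) = 0
  · rw [h1, zero_mul]
  · by_cases h2 : Y (select u (List.ofFn fun i => !m i)) = 0
    · rw [h2, mul_zero]
    · exfalso
      apply hne
      have e1 := hX _ h1
      have e2 := hY _ h2
      have e3 := length_select_add u m
      omega

lemma CP_supp : ∀ m : ℕ, ∀ p ∈ CP m, Supp p.2 m := by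
  intro m
  induction m using Nat.strong_induction_on with
  | _ m ih =>
    match m with
    | 0 => intro p hp; simp at hp
    | (n+1) =>
      intro p hp
      rw [CP_succ] at hp
      simp only [CmExpr] at hp
      by_cases h1 : n + 1 = 1
      · rw [if_pos h1] at hp
        simp at hp
        have hn : n = 0 := by omega
        subst hn
        rw [hp]
        exact supp_ofWord [Letter.c]
      · rw [if_neg h1] at hp
        have hn : 1 ≤ n := by omega
        have hprods : ∀ q ∈ prodsE n, Supp q.2 (n+1) := by
          intro q hq
          simp only [prodsE, List.mem_flatMap, List.mem_range] at hq
          obtain ⟨j, hj, hq⟩ := hq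
          by_cases hc : (n+1)/2 - j = 1
          · rw [if_pos hc] at hq
            rw [CPlevels_getD n (n+1-1) (by omega)] at hq
            simp only [List.mem_map] at hq
            obtain ⟨q', hq', rfl⟩ := hq
            exact supp_cmul_single Letter.b (ih n (by omega) q' hq')
          · rw [if_neg hc] at hq
            rw [CPlevels_getD n ((n+1)/2 - j - 1) (by omega),
              CPlevels_getD n ((n+1) - ((n+1)/2 - j)) (by omega)] at hq
            simp only [List.mem_flatMap, List.mem_map] at hq
            obtain ⟨q1, hq1, q2, hq2, rfl⟩ := hq
            have s1 := ih ((n+1)/2 - j - 1) (by omega) q1 hq1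
            have s2 := ih ((n+1) - ((n+1)/2 - j)) (by omega) q2 hq2
            exact supp_congr (by omega) (supp_cmul_single Letter.a (supp_shuffle s1 s2))
        by_cases hpar : (n+1) % 2 = 0
        · rw [if_pos hpar] at hp
          exact hprods p hp
        · rw [if_neg hpar] at hp
          rw [List.mem_append] at hp
          rcases hp with hp | hp
          · simp only [DkE, List.mem_flatMap, List.mem_range, List.mem_map] at hp
            obtain ⟨r, hr, s, hs, rfl⟩ := hp
            rw [CPlevels_getD n ((n+1)/2) (by omega)] at hr
            have hmemr : (CP ((n+1)/2)).getD r ([], 0) ∈ CP ((n+1)/2) := by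
              rw [List.getD_eq_getElem _ _ (by omega)]
              exact List.getElem_mem _
            have hmems : (CP ((n+1)/2)).getD s ([], 0) ∈ CP ((n+1)/2) := by
              rw [List.getD_eq_getElem _ _ (by omega)]
              exact List.getElem_mem _
            have s1 := ih ((n+1)/2) (by omega) _ hmemr
            have s2 := ih ((n+1)/2) (by omega) _ hmems
            rw [CPlevels_getD n ((n+1)/2) (by omega)]
            by_cases hsr : s = r
            · rw [if_pos hsr]
              exact supp_congr (by omega)
                (supp_cmul_single Letter.a (supp_smul _ (supp_shuffle s1 s1)))
            · rw [if_neg hsr]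
              exact supp_congr (by omega)
                (supp_cmul_single Letter.a (supp_shuffle s1 s2))
          · exact hprods p hp

-- chunk 10
lemma wsum_eval_zero {L : List (Word × Series)} {u : Word} (h : ∀ p ∈ L, p.2 u = 0) :
    wsum L u = 0 := by
  induction L with
  | nil => simp
  | cons p L ih =>
    rw [wsum_cons]
    have h1 : p.2 u = 0 := h p (by simp)
    have h2 : wsum L u = 0 := ih (fun q hq => h q (by simp [hq]))
    simp [h1, h2]

lemma TCs_supp {m : ℕ} {u : Word} (h : u.length ≠ m) : TCs m u = 0 := by
  apply wsum_eval_zero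
  intro p hp
  by_contra hne
  exact h (CP_supp m p hp u hne)

noncomputable def TT : Series := fun u => TCs u.length u

@[simp] lemma TT_nil : TT [] = 0 := by
  show wsum (CP 0) [] = 0
  simp

lemma shuffle_TT_TT (w : Word) :
    shuffle TT TT w
      = ∑ j ∈ Finset.range (w.length + 1), shuffle (TCs j) (TCs (w.length - j)) w := by
  rw [show (∑ j ∈ Finset.range (w.length + 1), shuffle (TCs j) (TCs (w.length - j)) w)
      = ∑ j ∈ Finset.range (w.length + 1), ∑ m : Fin w.length → Bool,
          TCs j (select w (List.ofFn m)) * TCs (w.length - j)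
            (select w (List.ofFn fun i => !m i)) from rfl]
  rw [Finset.sum_comm]
  apply Finset.sum_congr rfl
  intro m _
  symm
  rw [Finset.sum_eq_single (select w (List.ofFn m)).length]
  · have e : w.length - (select w (List.ofFn m)).length
        = (select w (List.ofFn fun i => !m i)).length := by
      have := length_select_add w m; omega
    rw [e]
    rfl
  · intro j _ hj
    rw [TCs_supp (fun h => hj h.symm), zero_mul]
  · intro hmem
    exfalso
    apply hmem
    simp only [Finset.mem_range]
    have := length_select_le w m
    omega

lemma sum_reflect_half (g : ℕ → ℝ) (N : ℕ) (hsym : ∀ j, j < N → g j = g (N - 1 - j)) :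
    ∑ j ∈ Finset.range N, g j
      = 2 * (∑ j ∈ Finset.range (N/2), g j)
        + (if N % 2 = 1 then g (N/2) else 0) := by
  rcases Nat.eq_zero_or_pos N with rfl | hN
  · simp
  have h2 : N/2 ≤ N := by omega
  rw [Finset.range_eq_Ico, ← Finset.sum_Ico_consecutive _ (Nat.zero_le (N/2)) h2]
  have hrefl : ∑ j ∈ Finset.Ico (N/2) N, g j
      = ∑ j ∈ Finset.Ico (N/2) N, g (N - 1 - j) := by
    apply Finset.sum_congr rfl
    intro j hj
    simp only [Finset.mem_Ico] at hj
    exact hsym j hj.2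
  rw [hrefl]
  have hIco : ∑ j ∈ Finset.Ico (N/2) N, g (N - 1 - j)
      = ∑ j ∈ Finset.Ico (N - 1 + 1 - N) (N - 1 + 1 - N/2), g j :=
    Finset.sum_Ico_reflect g (N/2) (by omega)
  rw [hIco]
  rw [show N - 1 + 1 - N = 0 from by omega, show N - 1 + 1 - N/2 = N/2 + N % 2 from by omega]
  by_cases hpar : N % 2 = 1
  · rw [hpar, if_pos rfl, ← Finset.range_eq_Ico, ← Finset.range_eq_Ico, Finset.sum_range_succ]
    ring
  · have h0 : N % 2 = 0 := by omega
    rw [h0, if_neg (by omega)]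
    simp only [add_zero]
    rw [← Finset.range_eq_Ico]
    ring

-- chunk 11
lemma sum_shuffle_fold (n : ℕ) (hn : 1 ≤ n) (v : Word) :
    ∑ j ∈ Finset.range (n+1), shuffle (TCs j) (TCs (n-j)) v
      = 2 * (∑ j ∈ Finset.range ((n+1)/2 - 1), shuffle (TCs (j+1)) (TCs (n-1-j)) v)
        + (if (n+1) % 2 = 1 then
            shuffle (TCs ((n+1)/2)) (TCs ((n+1)/2)) v else 0) := by
  have hg := sum_reflect_half (fun j => shuffle (TCs (j+1)) (TCs (n-1-j)) v) (n-1) ?hsym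
  case hsym =>
    intro j hj
    show shuffle (TCs (j+1)) (TCs (n-1-j)) v
        = shuffle (TCs ((n-1) - 1 - j + 1)) (TCs (n - 1 - ((n-1) - 1 - j))) v
    rw [show (n-1) - 1 - j + 1 = n - 1 - j from by omega,
      show n - 1 - ((n-1) - 1 - j) = j + 1 from by omega,
      shuffle_comm (TCs (j+1)) (TCs (n-1-j))]
  have hmain : ∑ j ∈ Finset.range (n+1), shuffle (TCs j) (TCs (n-j)) v
      = ∑ j ∈ Finset.range (n-1), shuffle (TCs (j+1)) (TCs (n-1-j)) v := by
    rw [Finset.sum_range_succ, Nat.sub_self, TC_zero, shuffle_zero_right, Pi.zero_apply,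
      add_zero]
    obtain ⟨ν, rfl⟩ : ∃ ν, n = ν + 1 := ⟨n-1, by omega⟩
    rw [Finset.sum_range_succ']
    rw [TC_zero, shuffle_zero_left, Pi.zero_apply, add_zero]
    rw [show ν + 1 - 1 = ν from rfl]
    apply Finset.sum_congr rfl
    intro j hj
    rw [show ν + 1 - (j + 1) = ν - j from by omega]
  rw [hmain, hg]
  congr 1
  · congr 1
    rw [show (n-1)/2 = (n+1)/2 - 1 from by omega]
  · by_cases hpar : (n-1) % 2 = 1
    · rw [if_pos hpar, if_pos (by omega)]
      rw [show (n-1)/2 + 1 = (n+1)/2 from by omega,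
        show n - 1 - ((n-1)/2) = (n+1)/2 from by omega]
    · rw [if_neg hpar, if_neg (by omega)]

lemma TT_cons (y : Letter) (w : Word) : TT (y :: w) = TCs (w.length + 1) (y :: w) := rfl

lemma TT_eq : TT = ofWord [Letter.c] + (2:ℝ) • cmul (ofWord [Letter.b]) TT
    - cmul (ofWord [Letter.a]) (shuffle TT TT) := by
  funext u
  have happly : (ofWord [Letter.c] + (2:ℝ) • cmul (ofWord [Letter.b]) TT
      - cmul (ofWord [Letter.a]) (shuffle TT TT)) u
      = ofWord [Letter.c] u + 2 * cmul (ofWord [Letter.b]) TT u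
        - cmul (ofWord [Letter.a]) (shuffle TT TT) u := rfl
  rw [happly]
  cases u with
  | nil => simp [ofWord]
  | cons y w =>
    cases w with
    | nil =>
      have h0 : TT [y] = TCs 1 [y] := rfl
      rw [h0, TCs_one, cmul_single_left_cons, cmul_single_left_cons, shuffle_nil]
      simp
    | cons z w' =>
      have h0 : TT (y :: z :: w') = TCs (w'.length + 1 + 1) (y :: z :: w') := rfl
      have hrec := TCs_rec (w'.length + 1) ((w'.length + 1 + 1)/2) (by omega) rfl
      rw [h0, hrec]
      have hshuf : shuffle TT TT (z :: w')
          = ∑ j ∈ Finset.range (w'.length + 1 + 1),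
              shuffle (TCs j) (TCs (w'.length + 1 - j)) (z :: w') := by
        rw [shuffle_TT_TT]
        rfl
      have hofc : ofWord [Letter.c] (y :: z :: w') = 0 := by simp [ofWord]
      have hTTzw : TT (z :: w') = TCs (w'.length + 1) (z :: w') := rfl
      cases y with
      | a =>
        simp only [Pi.add_apply, Pi.smul_apply, smul_eq_mul, Finset.sum_apply, ite_apply,
          Pi.neg_apply, Pi.zero_apply, cmul_single_left_cons, hofc, hshuf, hTTzw,
          reduceCtorEq, if_false, if_true, mul_zero, Finset.sum_const_zero, neg_zero,
          ite_self, add_zero, zero_add, mul_comm]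
        rw [sum_shuffle_fold (w'.length + 1) (by omega) (z :: w'), ← Finset.sum_mul]
        by_cases hpar : (w'.length + 1 + 1) % 2 = 1
        · simp only [if_pos hpar]
          ring
        · simp only [if_neg hpar]
          ring
      | b =>
        simp only [Pi.add_apply, Pi.smul_apply, smul_eq_mul, Finset.sum_apply, ite_apply,
          Pi.neg_apply, Pi.zero_apply, cmul_single_left_cons, hofc, hTTzw,
          reduceCtorEq, if_false, if_true, mul_zero, Finset.sum_const_zero, neg_zero,
          ite_self, add_zero, zero_add]
        ring
      | c =>
        simp only [Pi.add_apply, Pi.smul_apply, smul_eq_mul, Finset.sum_apply, ite_apply,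
          Pi.neg_apply, Pi.zero_apply, cmul_single_left_cons, hofc, hTTzw,
          reduceCtorEq, if_false, if_true, mul_zero, Finset.sum_const_zero, neg_zero,
          ite_self, add_zero, zero_add]
        ring

-- chunk 12
lemma cmul_add_left (P Q R : Series) : cmul (P + Q) R = cmul P R + cmul Q R := by
  funext w; simp [cmul, add_mul, Finset.sum_add_distrib]

lemma cmul_smul_left (c : ℝ) (P Q : Series) : cmul (c • P) Q = c • cmul P Q := by
  funext w; simp [cmul, Finset.mul_sum, mul_assoc]

noncomputable def SB (n : ℕ) : Series :=
  fun u => ((BP n).map (fun p => (gammaB p.1 : ℝ) * p.2 u)).sum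

lemma BP_supp : ∀ n : ℕ, ∀ p ∈ BP n, Supp p.2 n := by
  intro n
  match n with
  | 0 => intro p hp; simp [BP] at hp
  | 1 =>
    intro p hp
    simp only [BP, List.mem_singleton] at hp
    rw [hp]
    exact supp_ofWord [Letter.b]
  | (n+2) =>
    intro p hp
    simp only [BP, List.mem_map] at hp
    obtain ⟨q, hq, rfl⟩ := hp
    exact supp_cmul_single Letter.a (CP_supp (n+1) q hq)

lemma SB_eval_zero (n : ℕ) (u : Word) (h : u.length ≠ n) : SB n u = 0 := by
  apply List.sum_eq_zero
  intro x hx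
  simp only [List.mem_map] at hx
  obtain ⟨p, hp, rfl⟩ := hx
  have : p.2 u = 0 := by
    by_contra hne
    exact h (BP_supp n p hp u hne)
  rw [this, mul_zero]

lemma mainSeries_eval (u : Word) : mainSeries u = SB u.length u :=
  tsum_eq_single u.length (fun n hn => SB_eval_zero n u (fun h => hn (h ▸ rfl)))

lemma SB_zero : SB 0 = 0 := by
  funext u; simp [SB, BP]

lemma SB_one : SB 1 = ofWord [Letter.b] := by
  funext u
  simp only [SB, BP, List.map_cons, List.map_nil, List.sum_cons, List.sum_nil]
  rw [show gammaB [Letter.b] = 1 from rfl]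
  push_cast
  ring

lemma gammaB_a (w : Word) : ((gammaB (Letter.a :: w) : ℤ) : ℝ) = -mu w := by
  rw [show gammaB (Letter.a :: w)
    = -((-2 : ℤ) ^ (w.count Letter.a) * (2 : ℤ) ^ (w.count Letter.b)) from rfl]
  push_cast [mu]
  ring

lemma SB_succ (n : ℕ) : SB (n+2) = -cmul (ofWord [Letter.a]) (TCs (n+1)) := by
  funext u
  show ((BP (n+2)).map (fun p => (gammaB p.1 : ℝ) * p.2 u)).sum = _
  rw [show BP (n+2) = (CP (n + 1)).map
    (fun p => (Letter.a :: p.1, cmul (ofWord [Letter.a]) p.2)) from rfl]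
  rw [List.map_map]
  have : ∀ L : List (Word × Series),
      (L.map ((fun p => (gammaB p.1 : ℝ) * p.2 u)
          ∘ (fun p => (Letter.a :: p.1, cmul (ofWord [Letter.a]) p.2)))).sum
        = -(cmul (ofWord [Letter.a]) (wsum L) u) := by
    intro L
    induction L with
    | nil => simp
    | cons q L ih =>
      rw [List.map_cons, List.sum_cons, ih, wsum_cons, cmul_add_right, cmul_smul_right]
      simp only [Function.comp_apply, Pi.add_apply, Pi.smul_apply, smul_eq_mul]
      rw [gammaB_a]
      ring
  rw [this]
  rfl

lemma TT_eq_TCs_cons (z : Letter) (w' : Word) :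
    TT (z :: w') = TCs (w'.length + 1) (z :: w') := rfl

lemma mainSeries_eq : mainSeries = ofWord [Letter.b] - cmul (ofWord [Letter.a]) TT := by
  funext u
  rw [mainSeries_eval]
  have happ : (ofWord [Letter.b] - cmul (ofWord [Letter.a]) TT) u
      = ofWord [Letter.b] u - cmul (ofWord [Letter.a]) TT u := rfl
  rw [happ]
  cases u with
  | nil =>
    show SB 0 [] = _
    rw [SB_zero]
    simp [ofWord]
  | cons y w =>
    cases w with
    | nil =>
      show SB 1 [y] = _
      rw [SB_one, cmul_single_left_cons]
      simp
    | cons z w' =>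
      show SB (w'.length + 2) (y :: z :: w') = _
      have h1 : ofWord [Letter.b] (y :: z :: w') = 0 := by simp [ofWord]
      have h2 : cmul (ofWord [Letter.a]) TT (y :: z :: w')
          = if y = Letter.a then TT (z :: w') else 0 := cmul_single_left_cons _ _ _ _
      rw [SB_succ, h1, h2]
      simp only [Pi.neg_apply]
      rw [cmul_single_left_cons, TT_eq_TCs_cons]
      by_cases h : y = Letter.a
      · simp only [if_pos h]; ring
      · simp only [if_neg h]; ring

lemma mainSeries_nil : mainSeries [] = 0 := by
  rw [mainSeries_eval]
  show SB 0 [] = 0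
  rw [SB_zero]
  rfl

lemma twoS_nil : ((2:ℝ) • mainSeries) [] = 0 := by
  show (2:ℝ) * mainSeries [] = 0
  rw [mainSeries_nil, mul_zero]

lemma der_mainSeries_a : der Letter.a mainSeries = -TT := by
  funext w
  show mainSeries (Letter.a :: w) = -TT w
  rw [mainSeries_eq]
  have : (ofWord [Letter.b] - cmul (ofWord [Letter.a]) TT) (Letter.a :: w)
      = ofWord [Letter.b] (Letter.a :: w) - cmul (ofWord [Letter.a]) TT (Letter.a :: w) := rfl
  rw [this, cmul_single_left_cons, if_pos rfl]
  simp [ofWord]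

lemma der_mainSeries_b : der Letter.b mainSeries = ofWord [] := by
  funext w
  show mainSeries (Letter.b :: w) = ofWord [] w
  rw [mainSeries_eq]
  have : (ofWord [Letter.b] - cmul (ofWord [Letter.a]) TT) (Letter.b :: w)
      = ofWord [Letter.b] (Letter.b :: w) - cmul (ofWord [Letter.a]) TT (Letter.b :: w) := rfl
  rw [this, cmul_single_left_cons, if_neg (by simp)]
  by_cases h : w = []
  · subst h; simp [ofWord]
  · simp [ofWord, h]

lemma der_mainSeries_c : der Letter.c mainSeries = 0 := by
  funext w
  show mainSeries (Letter.c :: w) = 0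
  rw [mainSeries_eq]
  have : (ofWord [Letter.b] - cmul (ofWord [Letter.a]) TT) (Letter.c :: w)
      = ofWord [Letter.b] (Letter.c :: w) - cmul (ofWord [Letter.a]) TT (Letter.c :: w) := rfl
  rw [this, cmul_single_left_cons, if_neg (by simp)]
  simp [ofWord]

lemma key_aux : ∀ (N : ℕ) (u : Word), u.length ≤ N →
    cmul (shufExp ((2:ℝ) • mainSeries)) (ofWord [Letter.c]) u = TT u := by
  intro N
  induction N with
  | zero =>
    intro u hu
    have : u = [] := List.length_eq_zero_iff.1 (by omega)
    subst this
    rw [cmul_nil_eval, shufExp_nil _ twoS_nil, TT_nil]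
    simp [ofWord]
  | succ N ih =>
    intro u hu
    cases u with
    | nil =>
      rw [cmul_nil_eval, shufExp_nil _ twoS_nil, TT_nil]
      simp [ofWord]
    | cons x w =>
      have hw : w.length ≤ N := by simp at hu; omega
      rw [cmul_cons, shufExp_nil _ twoS_nil, one_mul]
      have hderE : der x (shufExp ((2:ℝ) • mainSeries))
          = shuffle ((2:ℝ) • der x mainSeries) (shufExp ((2:ℝ) • mainSeries)) := by
        rw [show (2:ℝ) • der x mainSeries = der x ((2:ℝ) • mainSeries) from rfl]
        exact der_shufExp x _ twoS_nil
      rw [hderE]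
      have hTT : TT (x :: w) = ofWord [Letter.c] (x :: w)
          + 2 * cmul (ofWord [Letter.b]) TT (x :: w)
          - cmul (ofWord [Letter.a]) (shuffle TT TT) (x :: w) := by
        conv_lhs => rw [TT_eq]
        rfl
      rw [hTT, cmul_single_left_cons, cmul_single_left_cons]
      cases x with
      | a =>
        rw [der_mainSeries_a]
        rw [show (2:ℝ) • (-TT) = (-2:ℝ) • TT from by
          funext v; show (2:ℝ) * (-TT v) = (-2:ℝ) * TT v; ring]
        rw [shuffle_smul_left, cmul_smul_left]
        rw [if_neg (by simp), if_pos rfl]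
        have h1 : shuffle TT TT w
            = shuffle (cmul (shufExp ((2:ℝ) • mainSeries)) (ofWord [Letter.c]))
                (cmul (shufExp ((2:ℝ) • mainSeries)) (ofWord [Letter.c])) w :=
          shuffle_congr w (fun v hv => (ih v (by omega)).symm)
            (fun v hv => (ih v (by omega)).symm)
        have h2 := congrFun (shuffle_c_c (shufExp ((2:ℝ) • mainSeries))
          (shufExp ((2:ℝ) • mainSeries))) w
        have h3 : shuffle (shufExp ((2:ℝ) • mainSeries))
              (cmul (shufExp ((2:ℝ) • mainSeries)) (ofWord [Letter.c]))
            = shuffle (cmul (shufExp ((2:ℝ) • mainSeries)) (ofWord [Letter.c]))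
              (shufExp ((2:ℝ) • mainSeries)) := shuffle_comm _ _
        rw [h3] at h2
        have h4 : cmul (shuffle (cmul (shufExp ((2:ℝ) • mainSeries)) (ofWord [Letter.c]))
              (shufExp ((2:ℝ) • mainSeries))
            + shuffle (cmul (shufExp ((2:ℝ) • mainSeries)) (ofWord [Letter.c]))
              (shufExp ((2:ℝ) • mainSeries))) (ofWord [Letter.c]) w
            = 2 * cmul (shuffle (cmul (shufExp ((2:ℝ) • mainSeries)) (ofWord [Letter.c]))
                (shufExp ((2:ℝ) • mainSeries))) (ofWord [Letter.c]) w := by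
          rw [cmul_add_left]
          simp only [Pi.add_apply]
          ring
        have h5 : cmul (shuffle (cmul (shufExp ((2:ℝ) • mainSeries)) (ofWord [Letter.c]))
              (shufExp ((2:ℝ) • mainSeries))) (ofWord [Letter.c]) w
            = cmul (shuffle TT (shufExp ((2:ℝ) • mainSeries))) (ofWord [Letter.c]) w := by
          apply cmul_congr_left
          intro v hv
          exact shuffle_congr v (fun t ht => ih t (by omega)) (fun t ht => rfl)
        have hcore : shuffle TT TT w
            = 2 * cmul (shuffle TT (shufExp ((2:ℝ) • mainSeries))) (ofWord [Letter.c]) w := by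
          rw [h1, h2, h4, h5]
        rw [hcore]
        simp only [Pi.smul_apply, smul_eq_mul]
        have hoc : ofWord [Letter.c] (Letter.a :: w) = 0 := by simp [ofWord]
        rw [hoc]
        rw [show shuffle TT (shufExp ((2:ℝ) • mainSeries))
          = shuffle (shufExp ((2:ℝ) • mainSeries)) TT from shuffle_comm _ _] at *
        ring
      | b =>
        rw [der_mainSeries_b, shuffle_smul_left, shuffle_nil_left, cmul_smul_left]
        rw [if_pos rfl, if_neg (by simp)]
        simp only [Pi.smul_apply, smul_eq_mul]
        rw [ih w hw]
        have hoc : ofWord [Letter.c] (Letter.b :: w) = 0 := by simp [ofWord]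
        rw [hoc]
        ring
      | c =>
        rw [der_mainSeries_c, smul_zero, shuffle_zero_left, cmul_zero_left]
        rw [if_neg (by simp), if_neg (by simp)]
        simp only [Pi.zero_apply]
        ring


/-- The main series has zero constant term and solves `S₀ = b − a·exp⧢(2S₀)·c`. -/
theorem mainSeries_solves :
    mainSeries [] = 0 ∧
    mainSeries = ofWord [Letter.b] -
        cmul (ofWord [Letter.a]) (cmul (shufExp ((2 : ℝ) • mainSeries)) (ofWord [Letter.c])) := by
  constructor
  · exact mainSeries_nil
  · have hkey : cmul (shufExp ((2:ℝ) • mainSeries)) (ofWord [Letter.c]) = TT :=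
      funext (fun u => key_aux u.length u le_rfl)
    rw [hkey]
    exact mainSeries_eq
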